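/- Let G be a compact Lie group, and define G to be a BU-group of type I if for all fixed-point-free orthogonal G-representations V, W, the existence of a G-equivariant map S(V) → S(W) implies dim V ≤ dim W; and of type II if for all such V, W of equal dimension, every G-map S(V) → S(W) has nonzero degree. If G is not a BU-group of type I, then G is not a BU-group of type II. -/

import Mathlib

/-- A (finite-dimensional) orthogonal representation of a (compact Lie) group `G`:
a finite-dimensional real inner product space with `G` acting by linear isometries. -/
structure OrthRep (G : Type) [Group G] where
  V : Type
  [nacg : NormedAddCommGroup V]
  [ips : InnerProductSpace ℝ V]
  [fd : FiniteDimensional ℝ V]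
  ρ : G →* (V ≃ₗᵢ[ℝ] V)

attribute [instance] OrthRep.nacg OrthRep.ips OrthRep.fd

/-- A representation is fixed-point-free if `V^G = 0`. -/
def OrthRep.FixedPointFree {G : Type} [Group G] (R : OrthRep G) : Prop :=
  ∀ v : R.V, (∀ g : G, R.ρ g v = v) → v = 0

/-- A `G`-map between the unit spheres `S(V) → S(W)`: a continuous map sending the unit
sphere to the unit sphere, equivariantly. (Only its values on the unit sphere matter.) -/
def IsEquivSphereMap {G : Type} [Group G] (R S : OrthRep G) (f : R.V → S.V) : Prop :=
  Continuous f ∧ (∀ v : R.V, ‖v‖ = 1 → ‖f v‖ = 1) ∧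
    ∀ (g : G) (v : R.V), ‖v‖ = 1 → f (R.ρ g v) = S.ρ g (f v)

/-- `G` is a BU-group of type I: for all fixed-point-free orthogonal `G`-representations
`V, W`, the existence of a `G`-map `S(V) → S(W)` implies `dim V ≤ dim W`. -/
def BUTypeI (G : Type) [Group G] : Prop :=
  ∀ R S : OrthRep G, R.FixedPointFree → S.FixedPointFree →
    (∃ f : R.V → S.V, IsEquivSphereMap R S f) →
      Module.finrank ℝ R.V ≤ Module.finrank ℝ S.V

/-- `G` is a BU-group of type II (relative to a mapping-degree assignment `deg`):
every `G`-map between unit spheres of fixed-point-free representations of equal dimension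
has nonzero degree. -/
def BUTypeII (G : Type) [Group G]
    (deg : ∀ R S : OrthRep G, ∀ f : R.V → S.V, IsEquivSphereMap R S f → ℤ) : Prop :=
  ∀ (R S : OrthRep G) (f : R.V → S.V) (hf : IsEquivSphereMap R S f),
    R.FixedPointFree → S.FixedPointFree →
      Module.finrank ℝ R.V = Module.finrank ℝ S.V → deg R S f hf ≠ 0

section AuxJoin
variable {G : Type} [Group G]

/-- `k`-fold orthogonal direct sum of a representation, with diagonal action. -/
noncomputable def piRep (R : OrthRep G) (k : ℕ) : OrthRep G where
  V := PiLp 2 (fun _ : Fin k => R.V)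
  ρ := {
    toFun := fun g => LinearIsometryEquiv.piLpCongrRight 2 (fun _ => R.ρ g)
    map_one' := by ext v; simp
    map_mul' := by intro g₁ g₂; ext v; simp }

attribute [reducible] piRep

lemma piRep_finrank (R : OrthRep G) (k : ℕ) :
    Module.finrank ℝ (piRep R k).V = k * Module.finrank ℝ R.V := by
  show Module.finrank ℝ (PiLp 2 (fun _ : Fin k => R.V)) = _
  rw [LinearEquiv.finrank_eq (WithLp.linearEquiv 2 ℝ (∀ _ : Fin k, R.V))]
  rw [Module.finrank_pi_fintype]
  simp [Finset.sum_const, Finset.card_univ]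

lemma piRep_apply (R : OrthRep G) (k : ℕ) (g : G) (v : (piRep R k).V) (j : Fin k) :
    (piRep R k).ρ g v j = R.ρ g (v j) := rfl

lemma piRep_fpf (R : OrthRep G) (k : ℕ) (hR : R.FixedPointFree) :
    (piRep R k).FixedPointFree := by
  intro v hv
  have : ∀ j : Fin k, v j = 0 := fun j => hR (v j) (fun g => congrArg (fun x : (piRep R k).V => x j) (hv g))
  ext j
  exact this j

variable {R S : OrthRep G}

open scoped Classical in
/-- Radial extension of a sphere map to the whole space. -/
noncomputable def radExt (f : R.V → S.V) (v : R.V) : S.V :=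
  if v = 0 then 0 else ‖v‖ • f (‖v‖⁻¹ • v)

lemma radExt_norm {f : R.V → S.V} (hf1 : ∀ v : R.V, ‖v‖ = 1 → ‖f v‖ = 1) (v : R.V) :
    ‖radExt f v‖ = ‖v‖ := by
  unfold radExt
  split_ifs with h
  · simp [h]
  · have hu : ‖(‖v‖ : ℝ)⁻¹ • v‖ = 1 := by
      rw [norm_smul, norm_inv, norm_norm, inv_mul_cancel₀ (norm_ne_zero_iff.mpr h)]
    rw [norm_smul, hf1 _ hu, norm_norm, mul_one]

lemma radExt_continuous {f : R.V → S.V} (hfc : Continuous f)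
    (hf1 : ∀ v : R.V, ‖v‖ = 1 → ‖f v‖ = 1) : Continuous (radExt f) := by
  rw [continuous_iff_continuousAt]
  intro v
  by_cases hv : v = 0
  · subst hv
    have h0 : radExt f 0 = 0 := by simp [radExt]
    rw [ContinuousAt, h0]
    apply squeeze_zero_norm (a := fun v : R.V => ‖v‖)
    · intro w; rw [radExt_norm hf1]
    · exact tendsto_norm_zero
  · have : ContinuousAt (fun w : R.V => ‖w‖ • f (‖w‖⁻¹ • w)) v := by
      apply ContinuousAt.smul (continuous_norm.continuousAt)
      exact hfc.continuousAt.comp <|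
        ((continuous_norm.continuousAt.inv₀ (by simpa using hv)).smul continuousAt_id)
    apply this.congr
    filter_upwards [isOpen_compl_singleton.mem_nhds (by simpa using hv)] with w hw
    simp only [Set.mem_compl_iff, Set.mem_singleton_iff] at hw
    simp [radExt, hw]

lemma radExt_equiv {f : R.V → S.V}
    (hfe : ∀ (g : G) (v : R.V), ‖v‖ = 1 → f (R.ρ g v) = S.ρ g (f v))
    (g : G) (v : R.V) : radExt f (R.ρ g v) = S.ρ g (radExt f v) := by
  by_cases hv : v = 0
  · simp [radExt, hv]
  · have h1 : R.ρ g v ≠ 0 := fun h => hv (by simpa using congrArg (R.ρ g).symm h)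
    have hn : ‖R.ρ g v‖ = ‖v‖ := (R.ρ g).norm_map v
    rw [radExt, radExt, if_neg h1, if_neg hv, hn]
    have : (‖v‖⁻¹ : ℝ) • R.ρ g v = R.ρ g (‖v‖⁻¹ • v) := ((R.ρ g).map_smul _ _).symm
    have hu : ‖(‖v‖ : ℝ)⁻¹ • v‖ = 1 := by
      rw [norm_smul, norm_inv, norm_norm, inv_mul_cancel₀ (norm_ne_zero_iff.mpr hv)]
    rw [this, hfe g _ hu, LinearIsometryEquiv.map_smul]

lemma radExt_unit {f : R.V → S.V} (v : R.V) (hv : ‖v‖ = 1) : radExt f v = f v := by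
  have h0 : v ≠ 0 := fun h => by simp [h] at hv
  simp [radExt, h0, hv]


variable (f : R.V → S.V)

/-- Zero-padded componentwise radial join `S(V^m) → S(W^n)` (for `m ≤ n`). -/
noncomputable def joinMap (m n : ℕ) : (piRep R m).V → (piRep S n).V :=
  fun v => (WithLp.equiv 2 (∀ _ : Fin n, S.V)).symm
    (fun j : Fin n => if h : (j : ℕ) < m then radExt f (v ⟨j, h⟩) else 0)

lemma joinMap_apply (m n : ℕ) (v : (piRep R m).V) (j : Fin n) :
    joinMap f m n v j = if h : (j : ℕ) < m then radExt f (v ⟨j, h⟩) else 0 := rfl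

lemma joinMap_continuous (hfc : Continuous f)
    (hf1 : ∀ v : R.V, ‖v‖ = 1 → ‖f v‖ = 1) (m n : ℕ) :
    Continuous (joinMap f m n) := by
  have hc : Continuous fun (v : ∀ _ : Fin m, R.V) (j : Fin n) =>
      (if h : (j : ℕ) < m then radExt f (v ⟨j, h⟩) else 0 : S.V) := by
    apply continuous_pi
    intro j
    by_cases h : (j : ℕ) < m
    · simp only [dif_pos h]
      exact (radExt_continuous hfc hf1).comp (continuous_apply _)
    · simp only [dif_neg h]; exact continuous_const
  exact ((PiLp.continuous_toLp 2 (fun _ : Fin n => S.V)).comp hc).comp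
    (PiLp.continuous_ofLp 2 (fun _ : Fin m => R.V))

lemma joinMap_normsq (hf1 : ∀ v : R.V, ‖v‖ = 1 → ‖f v‖ = 1) {m n : ℕ} (hmn : m ≤ n)
    (v : (piRep R m).V) : ‖joinMap f m n v‖ ^ 2 = ‖v‖ ^ 2 := by
  show ‖joinMap f m n v‖ ^ 2 = ‖(v : PiLp 2 (fun _ : Fin m => R.V))‖ ^ 2
  rw [PiLp.norm_sq_eq_of_L2, PiLp.norm_sq_eq_of_L2]
  set aux : ℕ → ℝ := fun t => if h : t < m then ‖v ⟨t, h⟩‖ ^ 2 else 0 with haux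
  have h1 : ∀ j : Fin n, ‖joinMap f m n v j‖ ^ 2 = aux (j : ℕ) := by
    intro j
    rw [joinMap_apply, haux]
    by_cases h : (j : ℕ) < m
    · simp only [dif_pos h, radExt_norm hf1]
    · simp only [dif_neg h, norm_zero]; ring
  calc ∑ j : Fin n, ‖joinMap f m n v j‖ ^ 2
      = ∑ j : Fin n, aux (j : ℕ) := by exact Finset.sum_congr rfl (fun j _ => h1 j)
    _ = ∑ t ∈ Finset.range n, aux t := Fin.sum_univ_eq_sum_range aux n
    _ = ∑ t ∈ Finset.range m, aux t := by
        refine (Finset.sum_subset (Finset.range_subset_range.2 hmn) ?_).symm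
        intro x _ hx
        exact dif_neg (by simpa using hx)
    _ = ∑ i : Fin m, aux (i : ℕ) := (Fin.sum_univ_eq_sum_range aux m).symm
    _ = ∑ i : Fin m, ‖v i‖ ^ 2 := by
        refine Finset.sum_congr rfl (fun i _ => ?_)
        simp only [haux, dif_pos i.isLt]

lemma joinMap_norm (hf1 : ∀ v : R.V, ‖v‖ = 1 → ‖f v‖ = 1) {m n : ℕ} (hmn : m ≤ n)
    (v : (piRep R m).V) : ‖joinMap f m n v‖ = ‖v‖ := by
  have := joinMap_normsq f hf1 hmn v
  have h2 : ‖joinMap f m n v‖ = Real.sqrt (‖joinMap f m n v‖ ^ 2) :=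
    (Real.sqrt_sq (norm_nonneg _)).symm
  rw [h2, this, Real.sqrt_sq (norm_nonneg _)]

lemma joinMap_equiv
    (hfe : ∀ (g : G) (v : R.V), ‖v‖ = 1 → f (R.ρ g v) = S.ρ g (f v)) (m n : ℕ)
    (g : G) (v : (piRep R m).V) :
    joinMap f m n ((piRep R m).ρ g v) = (piRep S n).ρ g (joinMap f m n v) := by
  ext j
  rw [piRep_apply, joinMap_apply, joinMap_apply]
  by_cases h : (j : ℕ) < m
  · rw [dif_pos h, dif_pos h, piRep_apply, radExt_equiv hfe]
  · rw [dif_neg h, dif_neg h, map_zero]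

end AuxJoin

/-- If `G` is not a BU-group of type I, then `G` is not a BU-group of
type II.  Here `deg` is any assignment of mapping degrees to `G`-maps between
equal-dimensional spheres satisfying the basic property of the topological degree that a
non-surjective map (one missing a point of the target sphere) has degree `0`. -/
theorem stmt_13 (G : Type) [Group G]
    (deg : ∀ R S : OrthRep G, ∀ f : R.V → S.V, IsEquivSphereMap R S f → ℤ)
    (hdeg : ∀ (R S : OrthRep G) (f : R.V → S.V) (hf : IsEquivSphereMap R S f),
      Module.finrank ℝ R.V = Module.finrank ℝ S.V →
      (∃ w : S.V, ‖w‖ = 1 ∧ ∀ v : R.V, ‖v‖ = 1 → f v ≠ w) → deg R S f hf = 0)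
    (h : ¬ BUTypeI G) :
    ¬ BUTypeII G deg := by
  intro hII
  unfold BUTypeI at h
  push_neg at h
  obtain ⟨R, S, hR, hS, ⟨f, hf⟩, hlt⟩ := h
  obtain ⟨hfc, hf1, hfe⟩ := hf
  set m := Module.finrank ℝ S.V with hm
  set n := Module.finrank ℝ R.V with hn
  -- m > 0, since otherwise S.V is trivial but S(V) is nonempty
  have hm0 : 0 < m := by
    by_contra hm0
    have hms : Subsingleton S.V :=
      Module.finrank_zero_iff.mp (Nat.eq_zero_of_not_pos hm0)
    have hn0 : 0 < n := lt_of_le_of_lt (Nat.zero_le m) hlt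
    have : Nontrivial R.V := Module.finrank_pos_iff.mp hn0
    obtain ⟨v, hv⟩ := exists_ne (0 : R.V)
    have hu : ‖(‖v‖ : ℝ)⁻¹ • v‖ = 1 := by
      rw [norm_smul, norm_inv, norm_norm, inv_mul_cancel₀ (norm_ne_zero_iff.mpr hv)]
    have h1 := hf1 _ hu
    rw [Subsingleton.elim (f ((‖v‖ : ℝ)⁻¹ • v)) 0, norm_zero] at h1
    exact zero_ne_one h1
  have hmn : m < n := hlt
  -- the join construction
  set R' := piRep R m with hR'
  set S' := piRep S n with hS'
  set F := joinMap f m n with hF'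
  have hrank : Module.finrank ℝ R'.V = Module.finrank ℝ S'.V := by
    exact (piRep_finrank R m).trans ((Nat.mul_comm _ _).trans (piRep_finrank S n).symm)
  have hF : IsEquivSphereMap R' S' F :=
    ⟨joinMap_continuous f hfc hf1 m n,
     fun v hv => by rw [hF', joinMap_norm f hf1 hmn.le, hv],
     fun g v _ => joinMap_equiv f hfe m n g v⟩
  -- the missed point
  have : Nontrivial S.V := Module.finrank_pos_iff.mp hm0
  obtain ⟨w, hw⟩ := exists_ne (0 : S.V)
  set w₀ : S.V := (‖w‖ : ℝ)⁻¹ • w with hw₀def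
  have hw₀ : ‖w₀‖ = 1 := by
    rw [hw₀def, norm_smul, norm_inv, norm_norm, inv_mul_cancel₀ (norm_ne_zero_iff.mpr hw)]
  set j₀ : Fin n := ⟨m, hmn⟩ with hj₀
  set p : S'.V := (WithLp.equiv 2 (∀ _ : Fin n, S.V)).symm
    (fun j : Fin n => if j = j₀ then w₀ else 0) with hpdef
  have hpj : ∀ j : Fin n, p j = if j = j₀ then w₀ else 0 := fun _ => rfl
  have hp1 : ‖p‖ = 1 := by
    have hsq : ‖p‖ ^ 2 = 1 := by
      show ‖(p : PiLp 2 (fun _ : Fin n => S.V))‖ ^ 2 = 1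
      rw [PiLp.norm_sq_eq_of_L2]
      have : ∀ j : Fin n, ‖p j‖ ^ 2 = if j = j₀ then (1 : ℝ) else 0 := by
        intro j
        rw [hpj]
        by_cases hj : j = j₀
        · simp [hj, hw₀]
        · simp [hj]
      rw [Finset.sum_congr rfl (fun j _ => this j)]
      simp
    have := Real.sqrt_sq (norm_nonneg p)
    rw [← this, hsq, Real.sqrt_one]
  have hmiss : ∀ v : R'.V, ‖v‖ = 1 → F v ≠ p := by
    intro v _ hvp
    have h1 : F v j₀ = p j₀ := congrArg (fun x : S'.V => x j₀) hvp
    rw [hF', joinMap_apply, hpj, if_pos rfl, dif_neg (by simp [hj₀])] at h1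
    have : w₀ ≠ 0 := fun h0 => by rw [h0, norm_zero] at hw₀; exact zero_ne_one hw₀
    exact this h1.symm
  have hd0 := hdeg R' S' F hF hrank ⟨p, hp1, hmiss⟩
  exact hII R' S' F hF (piRep_fpf R m hR) (piRep_fpf S n hS) hrank hd0
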